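/- Let A ∈ ℝ^{n×d} have thin SVD A = UΣVᵀ, let 1 ≤ k < rank(A), let U_k ∈ ℝ^{n×k} consist of the top k left singular vectors, and let A_{k,⊥} = A − A_k. Define sampling probabilities p_i = (1/2)‖(U_k)_{i*}‖₂²/k + (1/2)‖(A_{k,⊥})_{i*}‖₂²/‖A_{k,⊥}‖_F², and let W ∈ ℝ^{s×n} be the random sampling-and-rescaling matrix of Algorithm 1 built from these probabilities. Then E[‖U_kᵀ Wᵀ W A_{k,⊥}‖_F²] ≤ (2k/s) ‖A_{k,⊥}‖_F²; consequently, for ε > 0 and δ ∈ (0,1), if s ≥ 8k/(δ ε²) then P(‖U_kᵀ Wᵀ W A_{k,⊥}‖_F ≥ ε ‖A_{k,⊥}‖_F) ≤ δ/4. -/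

import Mathlib

open Matrix BigOperators

noncomputable def frobNorm {m n : Type*} [Fintype m] [Fintype n]
    (A : Matrix m n ℝ) : ℝ := Real.sqrt (∑ i, ∑ j, (A i j) ^ 2)

noncomputable def specNorm {m n : ℕ} (A : Matrix (Fin m) (Fin n) ℝ) : ℝ :=
  ‖LinearMap.toContinuousLinearMap (Matrix.toEuclideanLin A)‖

noncomputable def truncDiag {r : ℕ} (σ : Fin r → ℝ) (m : ℕ) :
    Matrix (Fin r) (Fin r) ℝ :=
  Matrix.diagonal fun i => if (i : ℕ) < m then σ i else 0

noncomputable def samplingMatrix {n : ℕ} (p : Fin n → ℝ) (s : ℕ) (ω : Fin s → Fin n) :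
    Matrix (Fin s) (Fin n) ℝ :=
  fun i j => if j = ω i then 1 / Real.sqrt (s * p j) else 0

noncomputable def expec {n s : ℕ} (p : Fin n → ℝ) (f : (Fin s → Fin n) → ℝ) : ℝ :=
  ∑ ω : Fin s → Fin n, (∏ i, p (ω i)) * f ω

open Classical in
noncomputable def probOf {n s : ℕ} (p : Fin n → ℝ) (E : (Fin s → Fin n) → Prop) : ℝ :=
  ∑ ω : Fin s → Fin n, if E ω then (∏ i, p (ω i)) else 0

def firstCols {n r : ℕ} (U : Matrix (Fin n) (Fin r) ℝ) (k : ℕ) (h : k ≤ r) :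
    Matrix (Fin n) (Fin k) ℝ :=
  fun i j => U i (Fin.castLE h j)

noncomputable def ridgeDiag {r : ℕ} (σ : Fin r → ℝ) (lam : ℝ) :
    Matrix (Fin r) (Fin r) ℝ :=
  Matrix.diagonal fun i => σ i / Real.sqrt (σ i ^ 2 + lam)


lemma expec_coord {n s : ℕ} (p : Fin n → ℝ) (hp : ∑ t, p t = 1) (i₀ : Fin s)
    (g : Fin n → ℝ) :
    ∑ ω : Fin s → Fin n, (∏ i, p (ω i)) * g (ω i₀) = ∑ t, p t * g t := by
  have h1 : ∀ ω : Fin s → Fin n,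
      (∏ i, p (ω i)) * g (ω i₀)
        = ∏ i, (p (ω i) * (if i = i₀ then g (ω i) else 1)) := by
    intro ω
    rw [Finset.prod_mul_distrib, Finset.prod_ite_eq' Finset.univ i₀ (fun i => g (ω i))]
    simp
  simp_rw [h1]
  rw [← Fintype.prod_sum (fun (i : Fin s) (t : Fin n) => p t * (if i = i₀ then g t else 1))]
  have h2 : ∀ i : Fin s, (∑ t, p t * (if i = i₀ then g t else 1))
      = if i = i₀ then ∑ t, p t * g t else 1 := by
    intro i
    by_cases h : i = i₀ <;> simp [h, hp]
  simp_rw [h2]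
  rw [Finset.prod_ite_eq' Finset.univ i₀ (fun _ => ∑ t, p t * g t)]
  simp

lemma expec_coord₂ {n s : ℕ} (p : Fin n → ℝ) (hp : ∑ t, p t = 1) {i₀ i₁ : Fin s}
    (hne : i₀ ≠ i₁) (g h : Fin n → ℝ) :
    ∑ ω : Fin s → Fin n, (∏ i, p (ω i)) * (g (ω i₀) * h (ω i₁))
      = (∑ t, p t * g t) * (∑ t, p t * h t) := by
  have h1 : ∀ ω : Fin s → Fin n,
      (∏ i, p (ω i)) * (g (ω i₀) * h (ω i₁))
        = ∏ i, (p (ω i) * (if i = i₀ then g (ω i) else 1)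
            * (if i = i₁ then h (ω i) else 1)) := by
    intro ω
    rw [Finset.prod_mul_distrib, Finset.prod_mul_distrib,
      Finset.prod_ite_eq' Finset.univ i₀ (fun i => g (ω i)),
      Finset.prod_ite_eq' Finset.univ i₁ (fun i => h (ω i))]
    simp [mul_assoc]
  simp_rw [h1]
  rw [← Fintype.prod_sum (fun (i : Fin s) (t : Fin n) =>
    p t * (if i = i₀ then g t else 1) * (if i = i₁ then h t else 1))]
  have h2 : ∀ i : Fin s, (∑ t, p t * (if i = i₀ then g t else 1) * (if i = i₁ then h t else 1))
      = (if i = i₀ then ∑ t, p t * g t else 1) * (if i = i₁ then ∑ t, p t * h t else 1) := by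
    intro i
    by_cases h0 : i = i₀
    · subst h0
      simp [hne]
    · by_cases h1' : i = i₁ <;> simp [h0, h1', Ne.symm hne, hp]
  simp_rw [h2]
  rw [Finset.prod_mul_distrib,
    Finset.prod_ite_eq' Finset.univ i₀ (fun _ => ∑ t, p t * g t),
    Finset.prod_ite_eq' Finset.univ i₁ (fun _ => ∑ t, p t * h t)]
  simp

lemma expec_sq {n s : ℕ} (p : Fin n → ℝ) (hp : ∑ t, p t = 1) (x : Fin n → ℝ)
    (hzero : ∑ t, p t * x t = 0) :
    ∑ ω : Fin s → Fin n, (∏ i, p (ω i)) * (∑ i, x (ω i)) ^ 2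
      = s * ∑ t, p t * x t ^ 2 := by
  have key : ∀ i i' : Fin s,
      (∑ ω : Fin s → Fin n, (∏ i'', p (ω i'')) * (x (ω i) * x (ω i')))
        = if i = i' then ∑ t, p t * x t ^ 2 else 0 := by
    intro i i'
    by_cases h : i = i'
    · subst h
      rw [if_pos rfl]
      have := expec_coord p hp i (fun t => x t * x t)
      simpa [pow_two] using this
    · rw [if_neg h, expec_coord₂ p hp h x x, hzero, mul_zero]
  calc ∑ ω : Fin s → Fin n, (∏ i, p (ω i)) * (∑ i, x (ω i)) ^ 2
      = ∑ ω : Fin s → Fin n, ∑ i : Fin s, ∑ i' : Fin s,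
          (∏ i'', p (ω i'')) * (x (ω i) * x (ω i')) := by
        apply Finset.sum_congr rfl
        intro ω _
        rw [pow_two, Finset.sum_mul_sum]
        rw [Finset.mul_sum]
        apply Finset.sum_congr rfl
        intro i _
        rw [Finset.mul_sum]
    _ = ∑ i : Fin s, ∑ i' : Fin s, ∑ ω : Fin s → Fin n,
          (∏ i'', p (ω i'')) * (x (ω i) * x (ω i')) := by
        rw [Finset.sum_comm]
        apply Finset.sum_congr rfl
        intro i _
        rw [Finset.sum_comm]
    _ = ∑ i : Fin s, ∑ i' : Fin s, if i = i' then ∑ t, p t * x t ^ 2 else 0 := by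
        simp_rw [key]
    _ = ∑ _i : Fin s, ∑ t, p t * x t ^ 2 := by
        apply Finset.sum_congr rfl
        intro i _
        rw [Finset.sum_ite_eq Finset.univ i (fun _ => ∑ t, p t * x t ^ 2)]
        simp
    _ = s * ∑ t, p t * x t ^ 2 := by
        rw [Finset.sum_const, Finset.card_univ, Fintype.card_fin, nsmul_eq_mul]

section AuxMat
variable {n d r k : ℕ}

lemma aux_Cform (A : Matrix (Fin n) (Fin d) ℝ) (U : Matrix (Fin n) (Fin r) ℝ)
    (V : Matrix (Fin d) (Fin r) ℝ) (σ : Fin r → ℝ)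
    (hA : A = U * Matrix.diagonal σ * Vᵀ) :
    A - U * truncDiag σ k * Vᵀ
      = U * Matrix.diagonal (fun i : Fin r => if (i : ℕ) < k then 0 else σ i) * Vᵀ := by
  rw [hA, ← Matrix.sub_mul, ← Matrix.mul_sub]
  unfold truncDiag
  rw [Matrix.diagonal_sub]
  have hfun : (fun i => σ i - if (i : ℕ) < k then σ i else 0)
      = (fun i : Fin r => if (i : ℕ) < k then 0 else σ i) := by
    funext i; by_cases h : (i : ℕ) < k <;> simp [h]
  rw [hfun]

lemma aux_BUD (σ' : Fin r → ℝ) (U : Matrix (Fin n) (Fin r) ℝ) (hU : Uᵀ * U = 1) (hkr : k < r) :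
    ((firstCols U k hkr.le)ᵀ * U)
        * Matrix.diagonal (fun i : Fin r => if (i : ℕ) < k then 0 else σ' i) = 0 := by
  ext j a
  rw [Matrix.mul_diagonal]
  have h1 : ((firstCols U k hkr.le)ᵀ * U) j a = (Uᵀ * U) (Fin.castLE hkr.le j) a := by
    simp [Matrix.mul_apply, firstCols, Matrix.transpose_apply]
  rw [h1, hU, Matrix.one_apply]
  by_cases h : (Fin.castLE hkr.le j) = a
  · rw [if_pos h, ← h]
    have hlt : ((Fin.castLE hkr.le j : Fin r) : ℕ) < k := j.isLt
    simp [hlt]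
  · simp [h]

lemma aux_BC0 (A : Matrix (Fin n) (Fin d) ℝ) (U : Matrix (Fin n) (Fin r) ℝ)
    (V : Matrix (Fin d) (Fin r) ℝ) (σ : Fin r → ℝ)
    (hU : Uᵀ * U = 1) (hA : A = U * Matrix.diagonal σ * Vᵀ) (hkr : k < r) :
    (firstCols U k hkr.le)ᵀ * (A - U * truncDiag σ k * Vᵀ) = 0 := by
  rw [aux_Cform A U V σ hA, ← Matrix.mul_assoc, ← Matrix.mul_assoc,
    aux_BUD σ U hU hkr, Matrix.zero_mul]

lemma aux_trace (U : Matrix (Fin n) (Fin r) ℝ) (V : Matrix (Fin d) (Fin r) ℝ)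
    (hU : Uᵀ * U = 1) (hV : Vᵀ * V = 1) (d' : Fin r → ℝ) :
    Matrix.trace ((U * Matrix.diagonal d' * Vᵀ)ᵀ * (U * Matrix.diagonal d' * Vᵀ))
      = ∑ i, d' i * d' i := by
  have hUc : ∀ (Y : Matrix (Fin r) (Fin d) ℝ), Uᵀ * (U * Y) = Y := fun Y => by
    rw [← Matrix.mul_assoc, hU, Matrix.one_mul]
  have h1 : (U * Matrix.diagonal d' * Vᵀ)ᵀ * (U * Matrix.diagonal d' * Vᵀ)
      = V * (Matrix.diagonal d' * (Matrix.diagonal d' * Vᵀ)) := by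
    simp only [Matrix.transpose_mul, Matrix.transpose_transpose, Matrix.diagonal_transpose,
      Matrix.mul_assoc]
    rw [hUc]
  rw [h1, Matrix.trace_mul_comm]
  simp only [Matrix.mul_assoc]
  rw [hV, Matrix.mul_one, Matrix.diagonal_mul_diagonal, Matrix.trace_diagonal]

end AuxMat

set_option maxHeartbeats 1600000 in
/-- leverage-score sampling, cross-term expectation and probability bound. -/
theorem stmt_11 {n d r : ℕ} {k : ℕ} (s : ℕ) (hs : 0 < s)
    (A : Matrix (Fin n) (Fin d) ℝ)
    (U : Matrix (Fin n) (Fin r) ℝ) (V : Matrix (Fin d) (Fin r) ℝ) (σ : Fin r → ℝ)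
    (hU : Uᵀ * U = 1) (hV : Vᵀ * V = 1)
    (hσdec : ∀ i j : Fin r, i ≤ j → σ j ≤ σ i) (hσpos : ∀ i, 0 < σ i)
    (hA : A = U * Matrix.diagonal σ * Vᵀ) (hrank : A.rank = r)
    (hk1 : 1 ≤ k) (hkr : k < r)
    (p : Fin n → ℝ)
    (hpdef : ∀ i, p i =
        1 / 2 * ((∑ j, (firstCols U k hkr.le i j) ^ 2) / k)
      + 1 / 2 * ((∑ j, ((A - U * truncDiag σ k * Vᵀ) i j) ^ 2)
          / frobNorm (A - U * truncDiag σ k * Vᵀ) ^ 2)) :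
    expec p (fun (ω : Fin s → Fin n) =>
        frobNorm ((firstCols U k hkr.le)ᵀ * (samplingMatrix p s ω)ᵀ
          * samplingMatrix p s ω * (A - U * truncDiag σ k * Vᵀ)) ^ 2)
      ≤ 2 * k / s * frobNorm (A - U * truncDiag σ k * Vᵀ) ^ 2
    ∧ ∀ ε δ : ℝ, 0 < ε → 0 < δ → δ < 1 → (s : ℝ) ≥ 8 * k / (δ * ε ^ 2) →
        probOf p (fun (ω : Fin s → Fin n) =>
          ε * frobNorm (A - U * truncDiag σ k * Vᵀ)
            ≤ frobNorm ((firstCols U k hkr.le)ᵀ * (samplingMatrix p s ω)ᵀ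
                * samplingMatrix p s ω * (A - U * truncDiag σ k * Vᵀ)))
        ≤ δ / 4 := by
  classical
  have hspos : (0 : ℝ) < s := by exact_mod_cast hs
  have hsne : (s : ℝ) ≠ 0 := ne_of_gt hspos
  have hkpos : (0 : ℝ) < k := by exact_mod_cast lt_of_lt_of_le Nat.zero_lt_one hk1
  set B := firstCols U k hkr.le with hBdef
  set C := A - U * truncDiag σ k * Vᵀ with hCdef
  -- orthogonality of B and C
  have hBC0 : Bᵀ * C = 0 := aux_BC0 A U V σ hU hA hkr
  have hBCe : ∀ (j : Fin k) (l : Fin d), ∑ t, B t j * C t l = 0 := by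
    intro j l
    have h := congrFun (congrFun hBC0 j) l
    simpa [Matrix.mul_apply] using h
  -- Frobenius norm of C
  have hfrobC : frobNorm C ^ 2 = ∑ t, ∑ l, C t l ^ 2 := by
    simp only [frobNorm]
    exact Real.sq_sqrt (by positivity)
  have htr1 : ∑ t, ∑ l, (C t l) ^ 2 = Matrix.trace (Cᵀ * C) := by
    simp only [Matrix.trace, Matrix.diag, Matrix.mul_apply, Matrix.transpose_apply, pow_two]
    exact Finset.sum_comm
  have hF2pos : 0 < ∑ t, ∑ l, C t l ^ 2 := by
    rw [htr1, hCdef, aux_Cform A U V σ hA, aux_trace U V hU hV]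
    have hle := Finset.single_le_sum
      (f := fun i : Fin r => (if (i : ℕ) < k then 0 else σ i)
        * (if (i : ℕ) < k then 0 else σ i))
      (fun i _ => mul_self_nonneg _) (Finset.mem_univ (⟨k, hkr⟩ : Fin r))
    simp only [lt_irrefl, if_neg (lt_irrefl k)] at hle
    refine lt_of_lt_of_le ?_ hle
    exact mul_pos (hσpos ⟨k, hkr⟩) (hσpos ⟨k, hkr⟩)
  have hF2ne : (∑ t, ∑ l, C t l ^ 2) ≠ 0 := ne_of_gt hF2pos
  -- probabilities
  have hpdef' : ∀ i, p i = 1 / 2 * ((∑ j, B i j ^ 2) / k)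
      + 1 / 2 * ((∑ l, C i l ^ 2) / (∑ t, ∑ l, C t l ^ 2)) := by
    intro i
    rw [hpdef i, hfrobC]
  have hpnn : ∀ t, 0 ≤ p t := by
    intro t
    rw [hpdef' t]
    positivity
  have hBtrace : ∑ t, ∑ j, (B t j) ^ 2 = (k : ℝ) := by
    rw [Finset.sum_comm]
    have h1 : ∀ j : Fin k, ∑ t, (B t j) ^ 2 = 1 := by
      intro j
      have h2 : (Uᵀ * U) (Fin.castLE hkr.le j) (Fin.castLE hkr.le j) = 1 := by
        rw [hU]; simp [Matrix.one_apply]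
      simpa [Matrix.mul_apply, pow_two, hBdef, firstCols] using h2
    rw [Finset.sum_congr rfl (fun j _ => h1 j)]
    simp
  have hpsum : ∑ t, p t = 1 := by
    calc ∑ t, p t
        = ∑ t, (1 / 2 * ((∑ j, B t j ^ 2) / k)
            + 1 / 2 * ((∑ l, C t l ^ 2) / (∑ t', ∑ l, C t' l ^ 2))) :=
          Finset.sum_congr rfl fun t _ => hpdef' t
      _ = 1 / 2 * ((∑ t, ∑ j, B t j ^ 2) / k)
            + 1 / 2 * ((∑ t, ∑ l, C t l ^ 2) / (∑ t', ∑ l, C t' l ^ 2)) := by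
          rw [Finset.sum_add_distrib]
          congr 1 <;> rw [← Finset.mul_sum, ← Finset.sum_div]
      _ = 1 := by
          rw [hBtrace, div_self (ne_of_gt hkpos), div_self hF2ne]
          norm_num
  have hB2p : ∀ t, (∑ j, B t j ^ 2) ≤ 2 * k * p t := by
    intro t
    rw [hpdef' t, mul_add]
    have h2 : 0 ≤ 2 * (k : ℝ) * (1 / 2 * ((∑ l, C t l ^ 2) / (∑ t', ∑ l, C t' l ^ 2))) := by
      positivity
    have h3 : 2 * (k : ℝ) * (1 / 2 * ((∑ j, B t j ^ 2) / k)) = ∑ j, B t j ^ 2 := by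
      field_simp
    linarith
  have hB0 : ∀ t, p t = 0 → ∀ j, B t j = 0 := by
    intro t hpt j
    have h1 := hB2p t
    rw [hpt, mul_zero] at h1
    have h2 : ∑ j', B t j' ^ 2 = 0 := le_antisymm h1 (by positivity)
    have h3 := (Finset.sum_eq_zero_iff_of_nonneg
      (fun j' _ => sq_nonneg (B t j'))).mp h2 j (Finset.mem_univ j)
    exact pow_eq_zero_iff (two_ne_zero) |>.mp h3
  -- entrywise formula for the sampled product
  have hentry : ∀ (ω : Fin s → Fin n) (j : Fin k) (l : Fin d),
      (Bᵀ * (samplingMatrix p s ω)ᵀ * samplingMatrix p s ω * C) j l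
        = ∑ i, 1 / ((s : ℝ) * p (ω i)) * (B (ω i) j * C (ω i) l) := by
    intro ω j l
    have hassoc : Bᵀ * (samplingMatrix p s ω)ᵀ * samplingMatrix p s ω * C
        = (Bᵀ * (samplingMatrix p s ω)ᵀ) * (samplingMatrix p s ω * C) := by
      rw [Matrix.mul_assoc]
    rw [hassoc, Matrix.mul_apply]
    have hX : ∀ i, (Bᵀ * (samplingMatrix p s ω)ᵀ) j i
        = B (ω i) j * (1 / Real.sqrt ((s : ℝ) * p (ω i))) := by
      intro i
      simp [Matrix.mul_apply, samplingMatrix, Matrix.transpose_apply, mul_ite, mul_zero]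
    have hY : ∀ i, (samplingMatrix p s ω * C) i l
        = (1 / Real.sqrt ((s : ℝ) * p (ω i))) * C (ω i) l := by
      intro i
      simp [Matrix.mul_apply, samplingMatrix, ite_mul, zero_mul]
    apply Finset.sum_congr rfl
    intro i _
    rw [hX i, hY i]
    have hcc : (1 / Real.sqrt ((s : ℝ) * p (ω i))) * (1 / Real.sqrt ((s : ℝ) * p (ω i)))
        = 1 / ((s : ℝ) * p (ω i)) := by
      rw [div_mul_div_comm, one_mul,
        Real.mul_self_sqrt (mul_nonneg (le_of_lt hspos) (hpnn _))]
    calc B (ω i) j * (1 / Real.sqrt ((s : ℝ) * p (ω i)))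
          * ((1 / Real.sqrt ((s : ℝ) * p (ω i))) * C (ω i) l)
        = (1 / Real.sqrt ((s : ℝ) * p (ω i))) * (1 / Real.sqrt ((s : ℝ) * p (ω i)))
          * (B (ω i) j * C (ω i) l) := by ring
      _ = 1 / ((s : ℝ) * p (ω i)) * (B (ω i) j * C (ω i) l) := by rw [hcc]
  have hfrob : ∀ ω : Fin s → Fin n,
      frobNorm (Bᵀ * (samplingMatrix p s ω)ᵀ * samplingMatrix p s ω * C) ^ 2
        = ∑ j, ∑ l, (∑ i, 1 / ((s : ℝ) * p (ω i)) * (B (ω i) j * C (ω i) l)) ^ 2 := by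
    intro ω
    simp only [frobNorm]
    rw [Real.sq_sqrt (by positivity)]
    exact Finset.sum_congr rfl fun j _ => Finset.sum_congr rfl fun l _ => by
      rw [hentry ω j l]
  -- the mean-zero property
  have hzero : ∀ (j : Fin k) (l : Fin d),
      ∑ t, p t * (1 / ((s : ℝ) * p t) * (B t j * C t l)) = 0 := by
    intro j l
    have hterm : ∀ t, p t * (1 / ((s : ℝ) * p t) * (B t j * C t l))
        = 1 / (s : ℝ) * (B t j * C t l) := by
      intro t
      by_cases hpt : p t = 0
      · rw [hpt, hB0 t hpt j]
        simp
      · field_simp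
    rw [Finset.sum_congr rfl (fun t _ => hterm t), ← Finset.mul_sum, hBCe j l, mul_zero]
  -- main expectation bound
  have main1 : expec p (fun ω : Fin s → Fin n =>
        frobNorm (Bᵀ * (samplingMatrix p s ω)ᵀ * samplingMatrix p s ω * C) ^ 2)
      ≤ 2 * k / s * (∑ t, ∑ l, C t l ^ 2) := by
    have step1 : expec p (fun ω : Fin s → Fin n =>
          frobNorm (Bᵀ * (samplingMatrix p s ω)ᵀ * samplingMatrix p s ω * C) ^ 2)
        = ∑ j, ∑ l, (s : ℝ) * ∑ t, p t * (1 / ((s : ℝ) * p t) * (B t j * C t l)) ^ 2 := by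
      calc expec p (fun ω : Fin s → Fin n =>
            frobNorm (Bᵀ * (samplingMatrix p s ω)ᵀ * samplingMatrix p s ω * C) ^ 2)
          = ∑ ω : Fin s → Fin n, (∏ i, p (ω i))
              * (∑ j, ∑ l, (∑ i, 1 / ((s : ℝ) * p (ω i)) * (B (ω i) j * C (ω i) l)) ^ 2) := by
            unfold expec
            exact Finset.sum_congr rfl fun ω _ =>
              congrArg (fun z => (∏ i, p (ω i)) * z) (hfrob ω)
        _ = ∑ j, ∑ l, ∑ ω : Fin s → Fin n, (∏ i, p (ω i))
              * (∑ i, 1 / ((s : ℝ) * p (ω i)) * (B (ω i) j * C (ω i) l)) ^ 2 := by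
            simp_rw [Finset.mul_sum]
            rw [Finset.sum_comm]
            exact Finset.sum_congr rfl fun j _ => Finset.sum_comm
        _ = ∑ j, ∑ l, (s : ℝ) * ∑ t, p t * (1 / ((s : ℝ) * p t) * (B t j * C t l)) ^ 2 :=
            Finset.sum_congr rfl fun j _ => Finset.sum_congr rfl fun l _ =>
              expec_sq p hpsum (fun t => 1 / ((s : ℝ) * p t) * (B t j * C t l)) (hzero j l)
    have step2 : ∑ j, ∑ l, (s : ℝ) * ∑ t, p t * (1 / ((s : ℝ) * p t) * (B t j * C t l)) ^ 2
        = (s : ℝ) * ∑ t, (p t * (1 / ((s : ℝ) * p t)) ^ 2)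
            * ((∑ j, B t j ^ 2) * (∑ l, C t l ^ 2)) := by
      simp_rw [← Finset.mul_sum]
      congr 1
      calc ∑ j, ∑ l, ∑ t, p t * (1 / ((s : ℝ) * p t) * (B t j * C t l)) ^ 2
          = ∑ t, ∑ j, ∑ l, p t * (1 / ((s : ℝ) * p t) * (B t j * C t l)) ^ 2 := by
            rw [show (∑ j, ∑ l, ∑ t, p t * (1 / ((s : ℝ) * p t) * (B t j * C t l)) ^ 2)
                = ∑ j, ∑ t, ∑ l, p t * (1 / ((s : ℝ) * p t) * (B t j * C t l)) ^ 2 from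
              Finset.sum_congr rfl fun j _ => Finset.sum_comm]
            exact Finset.sum_comm
        _ = ∑ t, (p t * (1 / ((s : ℝ) * p t)) ^ 2)
              * ((∑ j, B t j ^ 2) * (∑ l, C t l ^ 2)) := by
            apply Finset.sum_congr rfl
            intro t _
            rw [Finset.sum_mul_sum, Finset.mul_sum]
            apply Finset.sum_congr rfl
            intro j _
            rw [Finset.mul_sum]
            apply Finset.sum_congr rfl
            intro l _
            ring
    have step3 : ∀ t, (p t * (1 / ((s : ℝ) * p t)) ^ 2)
          * ((∑ j, B t j ^ 2) * (∑ l, C t l ^ 2))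
        ≤ 2 * k / (s : ℝ) ^ 2 * (∑ l, C t l ^ 2) := by
      intro t
      by_cases hpt : p t = 0
      · rw [hpt]
        simp only [mul_zero, zero_mul]
        positivity
      · have hppos : 0 < p t := lt_of_le_of_ne (hpnn t) (Ne.symm hpt)
        have heq : p t * (1 / ((s : ℝ) * p t)) ^ 2 = 1 / ((s : ℝ) ^ 2 * p t) := by
          field_simp
        rw [heq]
        have hbN := hB2p t
        have hcN : (0 : ℝ) ≤ ∑ l, C t l ^ 2 := by positivity
        rw [div_mul_eq_mul_div, one_mul,
          div_le_iff₀ (by positivity : (0 : ℝ) < (s : ℝ) ^ 2 * p t)]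
        have hrhs : 2 * (k : ℝ) / (s : ℝ) ^ 2 * (∑ l, C t l ^ 2) * ((s : ℝ) ^ 2 * p t)
            = 2 * k * p t * (∑ l, C t l ^ 2) := by
          field_simp
        rw [hrhs]
        calc (∑ j, B t j ^ 2) * (∑ l, C t l ^ 2)
            ≤ (2 * k * p t) * (∑ l, C t l ^ 2) :=
              mul_le_mul_of_nonneg_right hbN hcN
          _ = 2 * k * p t * (∑ l, C t l ^ 2) := by ring
    calc expec p (fun ω : Fin s → Fin n =>
          frobNorm (Bᵀ * (samplingMatrix p s ω)ᵀ * samplingMatrix p s ω * C) ^ 2)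
        = (s : ℝ) * ∑ t, (p t * (1 / ((s : ℝ) * p t)) ^ 2)
            * ((∑ j, B t j ^ 2) * (∑ l, C t l ^ 2)) := by rw [step1, step2]
      _ ≤ (s : ℝ) * ∑ t, 2 * k / (s : ℝ) ^ 2 * (∑ l, C t l ^ 2) :=
          mul_le_mul_of_nonneg_left
            (Finset.sum_le_sum fun t _ => step3 t) (le_of_lt hspos)
      _ = 2 * k / s * (∑ t, ∑ l, C t l ^ 2) := by
          rw [← Finset.mul_sum]
          field_simp
  constructor
  · rw [hfrobC]
    exact main1
  · intro ε δ hε hδ hδ1 hsge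
    have hfCpos : 0 < frobNorm C := by
      simp only [frobNorm]
      exact Real.sqrt_pos.mpr hF2pos
    have hprod_nn : ∀ ω : Fin s → Fin n, (0 : ℝ) ≤ ∏ i, p (ω i) :=
      fun ω => Finset.prod_nonneg fun i _ => hpnn _
    have hmarkov : probOf p (fun ω : Fin s → Fin n =>
          ε * frobNorm C ≤ frobNorm (Bᵀ * (samplingMatrix p s ω)ᵀ
            * samplingMatrix p s ω * C)) * (ε ^ 2 * frobNorm C ^ 2)
        ≤ expec p (fun ω : Fin s → Fin n =>
            frobNorm (Bᵀ * (samplingMatrix p s ω)ᵀ * samplingMatrix p s ω * C) ^ 2) := by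
      unfold probOf expec
      rw [Finset.sum_mul]
      apply Finset.sum_le_sum
      intro ω _
      by_cases hE : ε * frobNorm C
          ≤ frobNorm (Bᵀ * (samplingMatrix p s ω)ᵀ * samplingMatrix p s ω * C)
      · rw [if_pos hE]
        apply mul_le_mul_of_nonneg_left _ (hprod_nn ω)
        have h1 : (ε * frobNorm C) ^ 2
            ≤ frobNorm (Bᵀ * (samplingMatrix p s ω)ᵀ * samplingMatrix p s ω * C) ^ 2 :=
          pow_le_pow_left₀ (by positivity) hE 2
        calc ε ^ 2 * frobNorm C ^ 2 = (ε * frobNorm C) ^ 2 := by ring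
          _ ≤ _ := h1
      · rw [if_neg hE, zero_mul]
        exact mul_nonneg (hprod_nn ω) (by positivity)
    have hεC : (0 : ℝ) < ε ^ 2 * frobNorm C ^ 2 := by positivity
    have h1 : probOf p (fun ω : Fin s → Fin n =>
          ε * frobNorm C ≤ frobNorm (Bᵀ * (samplingMatrix p s ω)ᵀ
            * samplingMatrix p s ω * C)) * (ε ^ 2 * frobNorm C ^ 2)
        ≤ 2 * k / s * frobNorm C ^ 2 :=
      le_trans hmarkov (by rw [hfrobC]; exact main1)
    rw [← le_div_iff₀ hεC] at h1
    apply le_trans h1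
    have heq : (2 * (k : ℝ) / s * frobNorm C ^ 2) / (ε ^ 2 * frobNorm C ^ 2)
        = 2 * k / (s * ε ^ 2) := by
      field_simp
    rw [heq]
    have h8 : 8 * (k : ℝ) ≤ s * (δ * ε ^ 2) := by
      rw [ge_iff_le, div_le_iff₀ (by positivity)] at hsge
      linarith
    rw [div_le_div_iff₀ (by positivity) (by norm_num : (0 : ℝ) < 4)]
    nlinarith
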